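/- Let L be a finite semimodular lattice, let [o,i] be an interval of length 2 in L, and let m be an atom of [o,i] that is join-irreducible in L. Let x be a lower cover of i in L with x not in [o,i]. Then there is an atom a of [o,i] such that the set {x ⊓ m, x ⊓ a, o, x, a, m, i} is a seven-element sublattice of L isomorphic to S7 (the semimodular lattice of length 3 with three dual atoms), in which a is the unique dual atom that is a join of two other elements of the sublattice. -/

import Mathlib

variable {α : Type*}

/-- A binary relation is a lattice congruence. -/
def IsLatCon [Lattice α] (r : α → α → Prop) : Prop :=
  Equivalence r ∧ ∀ a b c d : α, r a b → r c d → r (a ⊔ c) (b ⊔ d) ∧ r (a ⊓ c) (b ⊓ d)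

/-- `latCg x y a b` : the principal congruence generated by `(x,y)` collapses `(a,b)`. -/
def latCg [Lattice α] (x y a b : α) : Prop :=
  ∀ r : α → α → Prop, IsLatCon r → r x y → r a b

/-- The seven-element semimodular lattice `S₇` with elements `u<y<x<i`, `u<o<a`, `o<m<i`,
dual atoms `x,a,m` of `i`, where `a = y ⊔ o` is the proper join. -/
def IsS7 [Lattice α] (u y o x a m i : α) : Prop :=
  u < y ∧ y < x ∧ x < i ∧ u < o ∧ o < a ∧ o < m ∧ m < i ∧ a < i ∧ y < a ∧
  x ≠ a ∧ a ≠ m ∧ x ≠ m ∧ y ≠ o ∧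
  x ⊓ a = y ∧ a ⊓ m = o ∧ x ⊓ m = u ∧ x ⊓ o = u ∧ y ⊓ o = u ∧ y ⊓ m = u ∧
  x ⊔ a = i ∧ a ⊔ m = i ∧ x ⊔ m = i ∧ y ⊔ o = a ∧ y ⊔ m = i ∧ o ⊔ x = i

theorem stmt_0 [Lattice α] [Fintype α]
    (hsm : ∀ a b c : α, a ⋖ b → (a ⊔ c = b ⊔ c ∨ a ⊔ c ⋖ b ⊔ c))
    (o i m x : α)
    (hlen2 : ∀ z ∈ Set.Icc o i, z = o ∨ z = i ∨ (o ⋖ z ∧ z ⋖ i))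
    (hom : o ⋖ m) (hmi : m ⋖ i)
    (hji : ∀ z : α, z ⋖ m → z = o)
    (hxi : x ⋖ i) (hx : x ∉ Set.Icc o i) :
    ∃ a : α, o ⋖ a ∧ a ⋖ i ∧ IsS7 (x ⊓ m) (x ⊓ a) o x a m i := by
  classical
  have hxle : x ≤ i := hxi.le
  have hox : ¬ o ≤ x := fun h => hx ⟨h, hxle⟩
  have hmx : ¬ m ≤ x := fun h => hox (hom.le.trans h)
  have hoi : o < i := hom.lt.trans hmi.lt
  -- u := x ⊓ m
  set u : α := x ⊓ m with hu
  have hum : u < m := lt_of_le_of_ne inf_le_right (fun h => hmx (h ▸ inf_le_left))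
  -- every element < m is ≤ o (join-irreducibility)
  have hlem : ∀ z : α, z < m → z ≤ o := by
    intro z hz
    obtain ⟨s, hzs, hsm'⟩ := exists_le_covBy_of_lt hz
    exact (hji s hsm') ▸ hzs
  have huo : u < o := by
    refine lt_of_le_of_ne (hlem u hum) (fun h => hox ?_)
    calc o = u := h.symm
    _ ≤ x := inf_le_left
  -- maximality of lower covers of i
  have hmaxi : ∀ c w : α, c ⋖ i → c < w → w ≤ i → w = i :=
    fun c w hc h1 h2 => h2.eq_of_not_lt (hc.2 h1)
  -- find minimal t with u ≤ t ≤ x and o < o ⊔ t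
  have hoxlt : o < o ⊔ x := by
    refine lt_of_le_of_ne le_sup_left (fun h => ?_)
    have hxo : x ≤ o := le_sup_right.trans h.ge
    exact hxi.2 (hxo.trans_lt hom.lt) hmi.lt
  obtain ⟨t, ht, hmint⟩ : ∃ t ∈ (Finset.univ.filter fun t => u ≤ t ∧ t ≤ x ∧ o < o ⊔ t),
      ∀ x' ∈ (Finset.univ.filter fun t => u ≤ t ∧ t ≤ x ∧ o < o ⊔ t), ¬ x' < t := by
    obtain ⟨t, ht⟩ := Finset.exists_minimal
      (s := Finset.univ.filter fun t => u ≤ t ∧ t ≤ x ∧ o < o ⊔ t)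
      ⟨x, by simp only [Finset.mem_filter, Finset.mem_univ, true_and]; exact ⟨inf_le_left, le_refl x, hoxlt⟩⟩
    exact ⟨t, ht.prop, fun y hy hlt => hlt.not_ge (ht.le_of_le hy hlt.le)⟩
  simp only [Finset.mem_filter, Finset.mem_univ, true_and] at ht hmint
  obtain ⟨hut, htx, hot⟩ := ht
  have hut' : u < t := by
    refine lt_of_le_of_ne hut (fun h => ?_)
    rw [← h, sup_eq_left.mpr huo.le] at hot
    exact lt_irrefl o hot
  obtain ⟨s, hus, hst⟩ := exists_le_covBy_of_lt hut'
  have hso : s ≤ o := by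
    by_contra hso
    have : o < o ⊔ s := lt_of_le_of_ne le_sup_left (fun h => hso (le_sup_right.trans h.ge))
    exact hmint s ⟨hus, hst.le.trans htx, this⟩ hst.lt
  -- a := o ⊔ t, o ⋖ a
  set a : α := o ⊔ t with ha
  have hoa : o ⋖ a := by
    rcases hsm s t o hst with h | h
    · exfalso
      have h2 : o = o ⊔ t := by rw [← sup_comm t o, ← h, sup_eq_right.mpr hso]
      exact hot.ne h2
    · rwa [sup_eq_right.mpr hso, sup_comm t o] at h
  have hai' : a ≤ i := sup_le hoi.le (htx.trans hxle)
  have hane : a ≠ i := fun h => ((h ▸ hoa).2 hom.lt hmi.lt).elim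
  have hai : a ⋖ i := by
    rcases hlen2 a ⟨le_sup_left, hai'⟩ with h | h | h
    · exact absurd h hoa.lt.ne'
    · exact absurd h hane
    · exact h.2
  set y : α := x ⊓ a with hy
  have hta : t ≤ a := le_sup_right
  have hty : t ≤ y := le_inf htx hta
  have huy : u < y := hut'.trans_le hty
  have hyx : y ≤ x := inf_le_left
  have hya : y ≤ a := inf_le_right
  have hyoa : y ⊔ o = a :=
    le_antisymm (sup_le hya le_sup_left) (sup_le le_sup_right (le_sup_of_le_left hty))
  have hxa_ne : x ≠ a := fun h => hox (le_sup_left.trans h.ge)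
  have hylt : y < x := lt_of_le_of_ne hyx
    (fun h => hane (hmaxi x a hxi (lt_of_le_of_ne (h ▸ hya) hxa_ne) hai'))
  have hylta : y < a := lt_of_le_of_ne hya (fun h => hox (le_sup_left.trans (h ▸ hyx)))
  have ham : a ⊓ m = o := by
    rcases hlen2 (a ⊓ m) ⟨le_inf le_sup_left hom.le, inf_le_left.trans hai'⟩ with h | h | h
    · exact h
    · exact absurd (h ▸ (inf_le_right : a ⊓ m ≤ m)) hmi.lt.not_ge
    · exfalso
      have hma : m ≤ a := by
        rcases lt_or_eq_of_le (inf_le_right : a ⊓ m ≤ m) with hlt | heq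
        · exact absurd hmi.lt (h.2.2 hlt)
        · exact heq ▸ inf_le_left
      rcases lt_or_eq_of_le hma with hlt | heq
      · exact hane (hmaxi m a hmi hlt hai')
      · exact hut'.not_ge (le_inf htx (hta.trans heq.ge))
  have ham_ne : a ≠ m := fun h => hoa.lt.ne' (by rw [← ham]; exact (inf_eq_left.mpr h.le).symm)
  have hxm_ne : x ≠ m := fun h => hmx h.ge
  have hyo_ne : y ≠ o := fun h => hox (h ▸ hyx)
  have hxaj : x ⊔ a = i := hmaxi x _ hxi
    (lt_of_le_of_ne le_sup_left (fun h => hox (le_sup_left.trans (le_sup_right.trans h.ge))))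
    (sup_le hxle hai')
  have hamj : a ⊔ m = i := hmaxi a _ hai
    (lt_of_le_of_ne le_sup_left
      (fun h => hom.lt.ne (by rw [← ham, inf_eq_right.mpr (le_sup_right.trans h.ge)])))
    (sup_le hai' hmi.le)
  have hxmj : x ⊔ m = i := hmaxi x _ hxi
    (lt_of_le_of_ne le_sup_left (fun h => hmx (le_sup_right.trans h.ge)))
    (sup_le hxle hmi.le)
  have hymj : y ⊔ m = i := hmaxi m _ hmi
    (lt_of_le_of_ne le_sup_right
      (fun h => huy.not_ge (le_inf hyx (le_sup_left.trans h.ge))))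
    (sup_le (hyx.trans hxle) hmi.le)
  have hoxj : o ⊔ x = i := hmaxi x _ hxi
    (lt_of_le_of_ne le_sup_right (fun h => hox (le_sup_left.trans h.ge)))
    (sup_le hoi.le hxle)
  have hxo_eq : x ⊓ o = u :=
    le_antisymm (le_inf inf_le_left (inf_le_right.trans hom.le)) (le_inf inf_le_left huo.le)
  have hyo_eq : y ⊓ o = u :=
    le_antisymm (le_inf (inf_le_left.trans hyx) (inf_le_right.trans hom.le))
      (le_inf huy.le huo.le)
  have hym_eq : y ⊓ m = u :=
    le_antisymm (le_inf (inf_le_left.trans hyx) inf_le_right) (le_inf huy.le inf_le_right)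
  exact ⟨a, hoa, hai, huy, hylt, hxi.lt, huo, hoa.lt, hom.lt, hmi.lt, hai.lt, hylta,
    hxa_ne, ham_ne, hxm_ne, hyo_ne, rfl, ham, rfl, hxo_eq, hyo_eq, hym_eq,
    hxaj, hamj, hxmj, hyoa, hymj, hoxj⟩
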